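/- For any positive integers n and r, the number of partitions of n into parts not divisible by r equals the number of partitions of n in which each part occurs fewer than r times (Glaisher's theorem). -/

import Mathlib

open Nat Finset

namespace GlaisherAux


variable {r : ℕ}

/-- r-adic valuation -/
def v (r y : ℕ) : ℕ := r.maxPowDiv y
/-- r-free part -/
def u (r y : ℕ) : ℕ := y / r ^ v r y

theorem F1 : u r y * r ^ v r y = y :=
  Nat.div_mul_cancel (Nat.maxPowDiv.pow_dvd (p := r) (n := y))

theorem F2 (hr : 2 ≤ r) (hy : y ≠ 0) : ¬ r ∣ u r y := by
  intro ⟨c, hc⟩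
  have h : r ^ (v r y + 1) ∣ y := by
    refine ⟨c, ?_⟩
    calc y = u r y * r ^ v r y := F1.symm
    _ = r ^ (v r y + 1) * c := by rw [hc]; ring
  have : v r y + 1 ≤ v r y := (Nat.pow_dvd_iff_le_padicValNat (show r ≠ 1 by omega) hy).1 h
  simp only [v] at this
  omega

theorem v_eq_zero (hr : 2 ≤ r) (ha : ¬ r ∣ a) : v r a = 0 := by
  by_contra h
  exact ha (dvd_trans (dvd_pow_self r h) (Nat.maxPowDiv.pow_dvd (p := r) (n := a)))

theorem ne_zero_of_not_dvd (ha : ¬ r ∣ a) : a ≠ 0 := by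
  rintro rfl; exact ha (dvd_zero r)

theorem F3v (hr : 2 ≤ r) (ha : ¬ r ∣ a) (k : ℕ) : v r (a * r ^ k) = k := by
  have ha0 : 0 < a := Nat.pos_of_ne_zero (ne_zero_of_not_dvd ha)
  have : v r (a * r ^ k) = v r a + k := by
    rw [mul_comm]; exact Nat.maxPowDiv.base_pow_mul hr ha0.ne' k
  rw [this, v_eq_zero hr ha, Nat.zero_add]

theorem F3u (hr : 2 ≤ r) (ha : ¬ r ∣ a) (k : ℕ) : u r (a * r ^ k) = a := by
  rw [u, F3v hr ha k, Nat.mul_div_cancel _ (Nat.pow_pos (by omega))]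

theorem S2 (hr : 2 ≤ r) {m N : ℕ} (hm : m < r ^ N) :
    ∑ k ∈ range N, m / r ^ k % r * r ^ k = m := by
  induction N generalizing m with
  | zero =>
    simp only [Finset.range_zero, Finset.sum_empty, pow_zero] at *
    omega
  | succ N ih =>
    rw [Finset.sum_range_succ']
    have h1 : ∀ k, m / r ^ (k + 1) % r * r ^ (k + 1) = r * ((m / r) / r ^ k % r * r ^ k) := by
      intro k
      have hd : m / r ^ (k + 1) = m / r / r ^ k := by
        rw [Nat.div_div_eq_div_mul, ← _root_.pow_succ']
      rw [hd, pow_succ]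
      ring
    simp only [h1]
    have hdm : m / r < r ^ N := Nat.div_lt_of_lt_mul (by rw [← _root_.pow_succ']; exact hm)
    rw [← Finset.mul_sum, ih hdm]
    simp [Nat.div_add_mod]

theorem S3 (hr : 2 ≤ r) {c : ℕ → ℕ} (hc : ∀ k, c k < r) {j N : ℕ} (hj : j < N) :
    (∑ k ∈ range N, c k * r ^ k) / r ^ j % r = c j := by
  induction j generalizing c N with
  | zero =>
    obtain ⟨N', rfl⟩ : ∃ N', N = N' + 1 := ⟨N - 1, by omega⟩
    rw [Finset.sum_range_succ']
    simp only [pow_zero, mul_one, pow_succ']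
    have : ∀ k ∈ range N', c (k + 1) * (r * r ^ k) = r * (c (k+1) * r ^ k) := fun k _ => by ring
    rw [Finset.sum_congr rfl this, ← Finset.mul_sum]
    simp [Nat.mul_add_mod, Nat.mod_eq_of_lt (hc 0)]
  | succ j ih =>
    obtain ⟨N', rfl⟩ : ∃ N', N = N' + 1 := ⟨N - 1, by omega⟩
    rw [Finset.sum_range_succ']
    have h2 : ∀ k ∈ range N', c (k + 1) * r ^ (k + 1) = r * (c (k+1) * r ^ k) := fun k _ => by
      ring
    rw [Finset.sum_congr rfl h2, ← Finset.mul_sum, pow_zero, mul_one]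
    have h3 : (r * ∑ k ∈ range N', c (k + 1) * r ^ k + c 0) / r
        = ∑ k ∈ range N', c (k + 1) * r ^ k := by
      rw [Nat.add_comm, Nat.add_mul_div_left _ _ (show 0 < r by omega),
        Nat.div_eq_of_lt (hc 0), Nat.zero_add]
    rw [_root_.pow_succ', ← Nat.div_div_eq_div_mul, h3]
    exact ih (fun k => hc (k + 1)) (by omega)

/-- key support bound: if digit `v y` of `f (u y)` is nonzero then `v y < f (u y)`. -/
theorem digit_support (hr : 2 ≤ r) {f : ℕ →₀ ℕ} {y : ℕ}
    (h : f (u r y) / r ^ v r y % r ≠ 0) : v r y < f (u r y) := by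
  have h1 : f (u r y) / r ^ v r y ≠ 0 := fun h0 => h (by rw [h0]; simp)
  have h2 : r ^ v r y ≤ f (u r y) := by
    by_contra hc
    exact h1 (Nat.div_eq_of_lt (by omega))
  calc v r y < r ^ v r y := Nat.lt_pow_self (by omega)
  _ ≤ f (u r y) := h2

/-- Forward map: digits of multiplicities. -/
noncomputable def phiF (hr : 2 ≤ r) (f : ℕ →₀ ℕ) : ℕ →₀ ℕ :=
  Finsupp.onFinset (f.support.biUnion fun a => (range (f a)).image fun k => a * r ^ k)
    (fun y => if y = 0 then 0 else f (u r y) / r ^ v r y % r)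
    (by
      intro y hy
      rw [Finset.mem_biUnion]
      split at hy
      · exact absurd rfl hy
      · next hy0 =>
        have hd := digit_support hr hy
        have hu : u r y ∈ f.support := by
          rw [Finsupp.mem_support_iff]; omega
        exact ⟨u r y, hu, Finset.mem_image.2 ⟨v r y, Finset.mem_range.2 hd, F1⟩⟩)

/-- Backward map: reassemble multiplicities from digits. -/
noncomputable def psiF (r : ℕ) (g : ℕ →₀ ℕ) : ℕ →₀ ℕ :=
  g.sum fun y c => Finsupp.single (u r y) (c * r ^ v r y)

theorem phiF_apply (hr : 2 ≤ r) (f : ℕ →₀ ℕ) (y : ℕ) :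
    phiF hr f y = if y = 0 then 0 else f (u r y) / r ^ v r y % r := rfl

theorem phiF_apply' (hr : 2 ≤ r) (f : ℕ →₀ ℕ) {a : ℕ} (ha : ¬ r ∣ a) (k : ℕ) :
    phiF hr f (a * r ^ k) = f a / r ^ k % r := by
  have h0 : a * r ^ k ≠ 0 := by
    have := ne_zero_of_not_dvd ha
    positivity
  rw [phiF_apply, if_neg h0, F3u hr ha, F3v hr ha]

theorem psiF_apply (g : ℕ →₀ ℕ) (a : ℕ) :
    psiF r g a = ∑ y ∈ g.support, if u r y = a then g y * r ^ v r y else 0 := by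
  rw [psiF, Finsupp.sum_apply]
  exact Finset.sum_congr rfl fun y _ => Finsupp.single_apply

theorem psiF_apply_range (hr : 2 ≤ r) (g : ℕ →₀ ℕ) {a : ℕ} (ha : ¬ r ∣ a) {N : ℕ}
    (hN : ∀ y ∈ g.support, u r y = a → v r y < N) :
    psiF r g a = ∑ k ∈ range N, g (a * r ^ k) * r ^ k := by
  have ha0 : a ≠ 0 := ne_zero_of_not_dvd ha
  set T : Finset ℕ := (range N).image fun k => a * r ^ k with hT
  set F : ℕ → ℕ := fun y => if u r y = a then g y * r ^ v r y else 0 with hF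
  have step1 : psiF r g a = ∑ y ∈ g.support ∪ T, F y := by
    rw [psiF_apply]
    refine Finset.sum_subset Finset.subset_union_left ?_
    intro y _ hy
    simp [hF, Finsupp.notMem_support_iff.1 hy]
  have step2 : ∑ y ∈ T, F y = ∑ y ∈ g.support ∪ T, F y := by
    refine Finset.sum_subset Finset.subset_union_right ?_
    intro y hy hyT
    have hys : y ∈ g.support := (Finset.mem_union.1 hy).resolve_right hyT
    simp only [hF]
    rw [if_neg]
    intro hu
    apply hyT
    have hvy := hN y hys hu
    rw [hT, Finset.mem_image]
    exact ⟨v r y, Finset.mem_range.2 hvy, by rw [← hu]; exact F1⟩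
  have hinj : Set.InjOn (fun k => a * r ^ k) (range N) := by
    intro k _ k' _ hkk'
    exact Nat.pow_right_injective hr (Nat.eq_of_mul_eq_mul_left (Nat.pos_of_ne_zero ha0) hkk')
  have step3 : ∑ y ∈ T, F y = ∑ k ∈ range N, g (a * r ^ k) * r ^ k := by
    rw [hT, Finset.sum_image hinj]
    refine Finset.sum_congr rfl fun k _ => ?_
    simp only [hF]
    rw [if_pos (F3u hr ha k), F3v hr ha k]
  rw [step1, ← step2, step3]


theorem phiF_lt (hr : 2 ≤ r) (f : ℕ →₀ ℕ) (x : ℕ) : phiF hr f x < r := by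
  rw [phiF_apply]
  split
  · omega
  · exact Nat.mod_lt _ (by omega)

theorem phiF_zero (hr : 2 ≤ r) (f : ℕ →₀ ℕ) : phiF hr f 0 = 0 := by
  simp [phiF_apply]

theorem psi_phi (hr : 2 ≤ r) (f : ℕ →₀ ℕ) (hf : ∀ a ∈ f.support, ¬ r ∣ a) :
    psiF r (phiF hr f) = f := by
  ext a
  by_cases hdvd : r ∣ a
  · have hfa : f a = 0 := by
      by_contra h
      exact hf a (Finsupp.mem_support_iff.2 h) hdvd
    rw [hfa, psiF_apply]
    refine Finset.sum_eq_zero fun y hy => ?_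
    have hy0 : y ≠ 0 := by
      rintro rfl
      exact (Finsupp.mem_support_iff.1 hy) (phiF_zero hr f)
    rw [if_neg fun hu : u r y = a => F2 hr hy0 (hu ▸ hdvd)]
  · set N := f a + 1 with hNdef
    have hN : ∀ y ∈ (phiF hr f).support, u r y = a → v r y < N := by
      intro y hy hu
      have hy' := Finsupp.mem_support_iff.1 hy
      rw [phiF_apply] at hy'
      split at hy'
      · exact absurd rfl hy'
      · have := digit_support hr hy'
        rw [hu] at this
        omega
    rw [psiF_apply_range hr _ hdvd hN]
    have hcong : ∀ k ∈ range N, phiF hr f (a * r ^ k) * r ^ k = f a / r ^ k % r * r ^ k :=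
      fun k _ => by rw [phiF_apply' hr f hdvd]
    have hlt : f a < r ^ N := by
      calc f a < r ^ f a := Nat.lt_pow_self (by omega)
      _ ≤ r ^ N := Nat.pow_le_pow_right (by omega) (by omega)
    rw [Finset.sum_congr rfl hcong, S2 hr hlt]

theorem phi_psi (hr : 2 ≤ r) (g : ℕ →₀ ℕ) (hlt : ∀ x, g x < r) (h0 : g 0 = 0) :
    phiF hr (psiF r g) = g := by
  ext y
  by_cases hy0 : y = 0
  · rw [hy0, phiF_zero hr, h0]
  · have ha : ¬ r ∣ u r y := F2 hr hy0
    set N := max (v r y + 1) ((g.support.sup (v r)) + 1) with hNdef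
    have hN : ∀ y' ∈ g.support, u r y' = u r y → v r y' < N := by
      intro y' hy' _
      have := Finset.le_sup (f := v r) hy'
      omega
    rw [phiF_apply, if_neg hy0, psiF_apply_range hr g ha hN,
      S3 hr (c := fun k => g (u r y * r ^ k)) (fun k => hlt _) (by omega : v r y < N)]
    rw [F1]

theorem psi_sum (g : ℕ →₀ ℕ) :
    (psiF r g).sum (fun a m => a * m) = g.sum (fun a m => a * m) := by
  rw [psiF, Finsupp.sum_sum_index (fun a => Nat.mul_zero a)
    (fun a b₁ b₂ => Nat.mul_add a b₁ b₂)]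
  refine Finsupp.sum_congr fun y _ => ?_
  rw [Finsupp.sum_single_index (Nat.mul_zero _)]
  calc u r y * (g y * r ^ v r y) = (u r y * r ^ v r y) * g y := by ring
  _ = y * g y := by rw [F1]

theorem msum (s : Multiset ℕ) : s.toFinsupp.sum (fun a m => a * m) = s.sum := by
  induction s using Multiset.induction_on with
  | empty => simp
  | cons a s ih =>
    rw [← Multiset.singleton_add, Multiset.toFinsupp_add,
      Finsupp.sum_add_index' (fun a => Nat.mul_zero a) (fun a b₁ b₂ => Nat.mul_add a b₁ b₂),
      Multiset.toFinsupp_singleton, Finsupp.sum_single_index (Nat.mul_zero a), ih,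
      Multiset.sum_add, Multiset.sum_singleton, Nat.mul_one]

theorem mem_toMultiset (f : ℕ →₀ ℕ) (x : ℕ) : x ∈ f.toMultiset ↔ f x ≠ 0 := by
  rw [← Multiset.count_pos, Finsupp.count_toMultiset]
  omega

variable (n r : ℕ)

/-- partitions with no part divisible by r, as finsupps -/
noncomputable def equivPA : {p : n.Partition // ∀ x ∈ p.parts, ¬ r ∣ x} ≃
    {f : ℕ →₀ ℕ // (∀ a ∈ f.support, ¬ r ∣ a) ∧ f.sum (fun a m => a * m) = n} where
  toFun p := ⟨p.1.parts.toFinsupp,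
    fun a ha => p.2 a (Multiset.mem_toFinset.1 (by rw [← Multiset.toFinsupp_support]; exact ha)),
    by rw [msum]; exact p.1.parts_sum⟩
  invFun f := ⟨⟨f.1.toMultiset,
      fun {x} hx => Nat.pos_of_ne_zero (ne_zero_of_not_dvd
        (f.2.1 x (Finsupp.mem_support_iff.2 ((mem_toMultiset f.1 x).1 hx)))),
      by rw [← msum, Finsupp.toMultiset_toFinsupp]; exact f.2.2⟩,
    by
      intro x hx
      exact f.2.1 x (Finsupp.mem_support_iff.2 ((mem_toMultiset f.1 x).1 hx))⟩
  left_inv p := by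
    apply Subtype.ext
    apply Nat.Partition.ext
    exact Multiset.toFinsupp_toMultiset _
  right_inv f := by
    apply Subtype.ext
    exact Finsupp.toMultiset_toFinsupp _

/-- partitions with multiplicities < r, as finsupps -/
noncomputable def equivPB : {p : n.Partition // ∀ x : ℕ, p.parts.count x < r} ≃
    {f : ℕ →₀ ℕ // (∀ x, f x < r) ∧ f 0 = 0 ∧ f.sum (fun a m => a * m) = n} where
  toFun p := ⟨p.1.parts.toFinsupp,
    fun x => by rw [Multiset.toFinsupp_apply]; exact p.2 x,
    by
      rw [Multiset.toFinsupp_apply, Multiset.count_eq_zero]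
      exact fun h => lt_irrefl 0 (p.1.parts_pos h),
    by rw [msum]; exact p.1.parts_sum⟩
  invFun f := ⟨⟨f.1.toMultiset,
      fun {x} hx => Nat.pos_of_ne_zero (by
        rintro rfl
        exact ((mem_toMultiset f.1 0).1 hx) f.2.2.1),
      by rw [← msum, Finsupp.toMultiset_toFinsupp]; exact f.2.2.2⟩,
    fun x => by
      show Multiset.count x (Finsupp.toMultiset f.1) < r
      rw [Finsupp.count_toMultiset]
      exact f.2.1 x⟩
  left_inv p := by
    apply Subtype.ext
    apply Nat.Partition.ext
    exact Multiset.toFinsupp_toMultiset _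
  right_inv f := by
    apply Subtype.ext
    exact Finsupp.toMultiset_toFinsupp _

/-- the heart of Glaisher's theorem: the digit bijection -/
noncomputable def equivAB (hr : 2 ≤ r) :
    {f : ℕ →₀ ℕ // (∀ a ∈ f.support, ¬ r ∣ a) ∧ f.sum (fun a m => a * m) = n} ≃
    {f : ℕ →₀ ℕ // (∀ x, f x < r) ∧ f 0 = 0 ∧ f.sum (fun a m => a * m) = n} where
  toFun f := ⟨phiF hr f.1, phiF_lt hr f.1, phiF_zero hr f.1, by
    have h := psi_sum (r := r) (phiF hr f.1)
    rw [psi_phi hr f.1 f.2.1] at h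
    rw [← h]; exact f.2.2⟩
  invFun g := ⟨psiF r g.1,
    by
      intro a ha
      have h := Finsupp.mem_support_iff.1 ha
      rw [psiF_apply] at h
      obtain ⟨y, hy, hy'⟩ := Finset.exists_ne_zero_of_sum_ne_zero h
      have hy0 : y ≠ 0 := by
        rintro rfl
        exact (Finsupp.mem_support_iff.1 hy) g.2.2.1
      by_contra hdvd
      refine hy' ?_
      rw [if_neg fun hu : u r y = a => F2 hr hy0 (hu ▸ hdvd)],
    by rw [psi_sum]; exact g.2.2.2⟩
  left_inv f := Subtype.ext (psi_phi hr f.1 f.2.1)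
  right_inv g := Subtype.ext (phi_psi hr g.1 g.2.1 g.2.2.1)

end GlaisherAux

open GlaisherAux in
/-- Glaisher: the number of partitions of n into parts not divisible by r
equals the number of partitions of n in which each part occurs fewer than
r times. -/
theorem glaisher (n r : ℕ) (hn : 0 < n) (hr : 0 < r) :
    Nat.card {p : n.Partition // ∀ x ∈ p.parts, ¬ r ∣ x} =
      Nat.card {p : n.Partition // ∀ x : ℕ, p.parts.count x < r} := by
  rcases eq_or_lt_of_le (show 1 ≤ r from hr) with h1 | h2
  · -- r = 1 : both sides are empty
    have hA : IsEmpty {p : n.Partition // ∀ x ∈ p.parts, ¬ r ∣ x} := by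
      constructor
      rintro ⟨p, hp⟩
      have : p.parts ≠ 0 := by
        intro h
        have := p.parts_sum
        rw [h] at this
        simp at this
        omega
      obtain ⟨x, hx⟩ := Multiset.exists_mem_of_ne_zero this
      exact hp x hx (h1 ▸ one_dvd x)
    have hB : IsEmpty {p : n.Partition // ∀ x : ℕ, p.parts.count x < r} := by
      constructor
      rintro ⟨p, hp⟩
      have : p.parts = 0 := by
        rw [Multiset.eq_zero_iff_forall_notMem]
        intro x hx
        have := hp x
        rw [← h1] at this
        have := Multiset.count_pos.2 hx
        omega
      have hs := p.parts_sum
      rw [this] at hs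
      simp at hs
      omega
    rw [Nat.card_of_isEmpty, Nat.card_of_isEmpty]
  · exact Nat.card_congr ((equivPA n r).trans (((equivAB n r h2).trans (equivPB n r).symm)))
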